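/- arXiv:2412.01903 — 2 statements merged into one kernel-verified Lean document; each statement's English description precedes it below -/
import Mathlib

section
/- Let ρ_{AB} be a density matrix on a finite-dimensional tensor product ℋ_A ⊗ ℋ_B with marginals ρ_A, ρ_B, let H_A, H_B be Hermitian operators, and set H_{AB} = H_A ⊗ 1 + 1 ⊗ H_B. Define F(ρ, H) = Tr(ρH) + Tr(ρ log ρ). Then F(ρ_{AB}, H_{AB}) ≥ F(ρ_A, H_A) + F(ρ_B, H_B). -/
open scoped ComplexOrder

/-- Matrix logarithm of a Hermitian matrix, via the functional calculus applied to `Real.log`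
(with the convention `log 0 = 0`). -/
noncomputable def mlog {n : Type*} [Fintype n] [DecidableEq n] (A : Matrix n n ℂ) :
    Matrix n n ℂ :=
  if h : A.IsHermitian then h.cfc Real.log else 0

/-- Kronecker (tensor) product of matrices, indexed by the product type. -/
def kron {a b : Type*} (A : Matrix a a ℂ) (B : Matrix b b ℂ) :
    Matrix (a × b) (a × b) ℂ :=
  Matrix.of fun i j => A i.1 j.1 * B i.2 j.2

/-- Partial trace over the second tensor factor. -/
noncomputable def ptraceB {a b : Type*} [Fintype b] (M : Matrix (a × b) (a × b) ℂ) :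
    Matrix a a ℂ :=
  Matrix.of fun i j => ∑ k : b, M (i, k) (j, k)

/-- Partial trace over the first tensor factor. -/
noncomputable def ptraceA {a b : Type*} [Fintype a] (M : Matrix (a × b) (a × b) ℂ) :
    Matrix b b ℂ :=
  Matrix.of fun i j => ∑ k : a, M (k, i) (k, j)

/-- The free energy `F(ρ,H) = Tr(ρH) + Tr(ρ log ρ)`. -/
noncomputable def freeEnergy {n : Type*} [Fintype n] [DecidableEq n]
    (ρ H : Matrix n n ℂ) : ℝ :=
  ((ρ * H).trace).re + ((ρ * mlog ρ).trace).re

set_option linter.unusedSectionVars false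

section Helpers

variable {n : Type*} [Fintype n] [DecidableEq n]

lemma trace_conj_mul_conj (U : Matrix n n ℂ) (hU : star U * U = 1) (d e : n → ℂ) :
    ((U * Matrix.diagonal d * star U) * (U * Matrix.diagonal e * star U)).trace
      = ∑ i, d i * e i := by
  have : (U * Matrix.diagonal d * star U) * (U * Matrix.diagonal e * star U)
      = U * (Matrix.diagonal d * Matrix.diagonal e) * star U := by
    rw [show U * Matrix.diagonal d * star U * (U * Matrix.diagonal e * star U)
      = U * (Matrix.diagonal d * ((star U * U) * Matrix.diagonal e)) * star U from by
        simp only [mul_assoc], hU, one_mul, ← mul_assoc]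
  rw [this, Matrix.trace_mul_cycle, ← mul_assoc, hU, one_mul, Matrix.diagonal_mul_diagonal,
    Matrix.trace_diagonal]

lemma trace_mul_cfc {A : Matrix n n ℂ} (hA : A.IsHermitian) (f : ℝ → ℝ) :
    (A * hA.cfc f).trace = ∑ i, ((hA.eigenvalues i * f (hA.eigenvalues i) : ℝ) : ℂ) := by
  have h := trace_conj_mul_conj (Matrix.IsHermitian.eigenvectorUnitary hA : Matrix n n ℂ)
    (Unitary.coe_star_mul_self _) (RCLike.ofReal ∘ hA.eigenvalues)
    (RCLike.ofReal ∘ f ∘ hA.eigenvalues)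
  rw [← Unitary.conjStarAlgAut_apply (S := ℂ)
    (x := Matrix.diagonal (RCLike.ofReal ∘ hA.eigenvalues)), ← hA.spectral_theorem] at h
  rw [Matrix.IsHermitian.cfc, Unitary.conjStarAlgAut_apply, h]
  simp

lemma trace_eq_sum_eigenvalues {A : Matrix n n ℂ} (hA : A.IsHermitian) :
    A.trace = ∑ i, ((hA.eigenvalues i : ℝ) : ℂ) := by
  conv_lhs => rw [hA.spectral_theorem]
  rw [Unitary.conjStarAlgAut_apply, Matrix.trace_mul_cycle,
    Unitary.coe_star_mul_self, one_mul, Matrix.trace_diagonal]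
  simp

lemma conj_diag_apply (N : Matrix n n ℂ) (p : n → ℝ) (s : n) :
    (N * Matrix.diagonal (fun i => (p i : ℂ)) * star N) s s
      = ((∑ i, p i * Complex.normSq (N s i) : ℝ) : ℂ) := by
  push_cast
  simp only [Matrix.mul_apply, Matrix.diagonal_apply, Matrix.star_apply, Finset.sum_mul,
    mul_ite, mul_zero, ite_mul, zero_mul, Finset.sum_ite_eq', Finset.mem_univ, if_true]
  refine Finset.sum_congr rfl fun i _ => ?_
  rw [mul_comm (N s i) ((p i : ℂ)), mul_assoc]
  simp [Complex.star_def, Complex.mul_conj]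

lemma trace_mul_std (X : Matrix n n ℂ) (i j : n) :
    (X * Matrix.single i j (1 : ℂ)).trace = X j i := by
  simp [Matrix.trace, Matrix.diag, Matrix.mul_apply, Matrix.single, ite_and]

end Helpers

section KronHelpers

variable {a b : Type*} [Fintype a] [DecidableEq a] [Fintype b] [DecidableEq b]

lemma kron_mul (A C : Matrix a a ℂ) (B D : Matrix b b ℂ) :
    kron A B * kron C D = kron (A * C) (B * D) := by
  ext ⟨i, k⟩ ⟨j, l⟩
  simp only [kron, Matrix.mul_apply, Matrix.of_apply, Fintype.sum_prod_type, Finset.mul_sum,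
    Finset.sum_mul]
  rw [Finset.sum_comm]
  refine Finset.sum_congr rfl fun x _ => Finset.sum_congr rfl fun y _ => ?_
  ring

lemma kron_star (A : Matrix a a ℂ) (B : Matrix b b ℂ) :
    star (kron A B) = kron (star A) (star B) := by
  ext ⟨i, k⟩ ⟨j, l⟩
  simp [kron, Matrix.star_apply]

lemma kron_one : kron (1 : Matrix a a ℂ) (1 : Matrix b b ℂ) = 1 := by
  ext ⟨i, k⟩ ⟨j, l⟩
  simp only [kron, Matrix.one_apply, Matrix.of_apply, Prod.mk.injEq]
  by_cases h1 : i = j <;> by_cases h2 : k = l <;> simp [h1, h2, Prod.ext_iff]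

lemma ptraceB_isHermitian {M : Matrix (a × b) (a × b) ℂ} (h : M.IsHermitian) :
    (ptraceB M).IsHermitian := by
  ext m m'
  simp only [Matrix.conjTranspose_apply, ptraceB, Matrix.of_apply, star_sum]
  exact Finset.sum_congr rfl fun k _ => h.apply _ _

lemma ptraceA_isHermitian {M : Matrix (a × b) (a × b) ℂ} (h : M.IsHermitian) :
    (ptraceA M).IsHermitian := by
  ext m m'
  simp only [Matrix.conjTranspose_apply, ptraceA, Matrix.of_apply, star_sum]
  exact Finset.sum_congr rfl fun k _ => h.apply _ _

lemma trace_mul_kronA (M : Matrix (a × b) (a × b) ℂ) (H : Matrix a a ℂ) :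
    (M * kron H 1).trace = (ptraceB M * H).trace := by
  simp only [Matrix.trace, Matrix.diag, Matrix.mul_apply, ptraceB, kron, Matrix.of_apply,
    Fintype.sum_prod_type, Matrix.one_apply, Finset.sum_mul, mul_ite, mul_one, mul_zero,
    Finset.sum_ite_eq', Finset.mem_univ, if_true]
  exact Finset.sum_congr rfl fun i _ => Finset.sum_comm
lemma trace_mul_kronB (M : Matrix (a × b) (a × b) ℂ) (H : Matrix b b ℂ) :
    (M * kron 1 H).trace = (ptraceA M * H).trace := by
  simp only [Matrix.trace, Matrix.diag, Matrix.mul_apply, ptraceA, kron, Matrix.of_apply,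
    Fintype.sum_prod_type, Matrix.one_apply, Finset.sum_mul, ite_mul, one_mul, zero_mul,
    mul_ite, mul_zero]
  trans (∑ x : a, ∑ x1 : b, ∑ x3 : b, M (x, x1) (x, x3) * H x3 x1)
  · refine Finset.sum_congr rfl fun x _ => Finset.sum_congr rfl fun x1 _ => ?_
    rw [Finset.sum_comm]
    simp [Finset.sum_ite_eq']
  · rw [Finset.sum_comm]
    exact Finset.sum_congr rfl fun _ _ => Finset.sum_comm

lemma ptraceB_conj (V : Matrix a a ℂ) (W : Matrix b b ℂ) (hW : W * star W = 1)
    (M : Matrix (a × b) (a × b) ℂ) :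
    ptraceB (star (kron V W) * M * kron V W) = star V * ptraceB M * V := by
  ext m m'
  have e1 : (ptraceB (star (kron V W) * M * kron V W)) m m'
      = ((star (kron V W) * M * kron V W) * kron (Matrix.single m' m 1) 1).trace := by
    rw [trace_mul_kronA, trace_mul_std]
  have e2 : star (kron V W) * M * kron V W * kron (Matrix.single m' m 1) 1
      = star (kron V W) * (M * (kron V W * kron (Matrix.single m' m 1) 1)) := by
    simp only [mul_assoc]
  have hK : kron V W * kron (Matrix.single m' m 1) 1 * star (kron V W)
      = kron (V * Matrix.single m' m 1 * star V) 1 := by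
    rw [kron_star, kron_mul, kron_mul, mul_one, hW]
  rw [e1, e2, Matrix.trace_mul_comm, mul_assoc, hK, trace_mul_kronA,
    show ptraceB M * (V * Matrix.single m' m 1 * star V)
      = ptraceB M * (V * Matrix.single m' m 1) * star V from by simp only [mul_assoc],
    Matrix.trace_mul_cycle, ← mul_assoc, trace_mul_std]

lemma ptraceA_conj (V : Matrix a a ℂ) (W : Matrix b b ℂ) (hV : V * star V = 1)
    (M : Matrix (a × b) (a × b) ℂ) :
    ptraceA (star (kron V W) * M * kron V W) = star W * ptraceA M * W := by
  ext m m'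
  have e1 : (ptraceA (star (kron V W) * M * kron V W)) m m'
      = ((star (kron V W) * M * kron V W) * kron 1 (Matrix.single m' m 1)).trace := by
    rw [trace_mul_kronB, trace_mul_std]
  have e2 : star (kron V W) * M * kron V W * kron 1 (Matrix.single m' m 1)
      = star (kron V W) * (M * (kron V W * kron 1 (Matrix.single m' m 1))) := by
    simp only [mul_assoc]
  have hK : kron V W * kron 1 (Matrix.single m' m 1) * star (kron V W)
      = kron 1 (W * Matrix.single m' m 1 * star W) := by
    rw [kron_star, kron_mul, kron_mul, mul_one, hV]
  rw [e1, e2, Matrix.trace_mul_comm, mul_assoc, hK, trace_mul_kronB,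
    show ptraceA M * (W * Matrix.single m' m 1 * star W)
      = ptraceA M * (W * Matrix.single m' m 1) * star W from by simp only [mul_assoc],
    Matrix.trace_mul_cycle, ← mul_assoc, trace_mul_std]

end KronHelpers

/-- The scalar Klein inequality. -/
lemma scalar_klein {x y : ℝ} (hx : 0 ≤ x) (hy : 0 < y) :
    x * Real.log y + (x - y) ≤ x * Real.log x := by
  rcases eq_or_lt_of_le hx with h0 | hxpos
  · simp [← h0]
    linarith
  · have h1 := Real.log_le_sub_one_of_pos (div_pos hy hxpos)
    rw [Real.log_div hy.ne' hxpos.ne'] at h1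
    have h2 : x * (y / x - 1) = y - x := by field_simp
    nlinarith [mul_le_mul_of_nonneg_left h1 hx]

/-- Superadditivity of free energy: for a bipartite density matrix `ρ_{AB}` with marginals
`ρ_A, ρ_B`, Hermitian `H_A, H_B` and `H_{AB} = H_A ⊗ 1 + 1 ⊗ H_B`, one has
`F(ρ_{AB}, H_{AB}) ≥ F(ρ_A, H_A) + F(ρ_B, H_B)`. -/
theorem free_energy_superadditive {a b : Type*} [Fintype a] [DecidableEq a]
    [Fintype b] [DecidableEq b]
    (ρ : Matrix (a × b) (a × b) ℂ) (hρ : ρ.PosSemidef) (hρ1 : ρ.trace = 1)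
    (HA : Matrix a a ℂ) (HB : Matrix b b ℂ)
    (hHA : HA.IsHermitian) (hHB : HB.IsHermitian) :
    freeEnergy (ptraceB ρ) HA + freeEnergy (ptraceA ρ) HB ≤
      freeEnergy ρ (kron HA (1 : Matrix b b ℂ) + kron (1 : Matrix a a ℂ) HB) := by
  classical
  have hρH : ρ.IsHermitian := hρ.1
  have hA1 : (ptraceB ρ).IsHermitian := ptraceB_isHermitian hρH
  have hB1 : (ptraceA ρ).IsHermitian := ptraceA_isHermitian hρH
  set U : Matrix (a × b) (a × b) ℂ := (hρH.eigenvectorUnitary : Matrix (a × b) (a × b) ℂ)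
    with hUdef
  set V : Matrix a a ℂ := (hA1.eigenvectorUnitary : Matrix a a ℂ) with hVdef
  set W : Matrix b b ℂ := (hB1.eigenvectorUnitary : Matrix b b ℂ) with hWdef
  set p : a × b → ℝ := hρH.eigenvalues with hpdef
  set q : a → ℝ := hA1.eigenvalues with hqdef
  set r : b → ℝ := hB1.eigenvalues with hrdef
  have hpnn : ∀ i, 0 ≤ p i := fun i => hρ.eigenvalues_nonneg i
  -- reduce the energy terms
  have henergy : ((ρ * (kron HA 1 + kron 1 HB)).trace).re
      = ((ptraceB ρ * HA).trace).re + ((ptraceA ρ * HB).trace).re := by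
    rw [mul_add, Matrix.trace_add, trace_mul_kronA, trace_mul_kronB, Complex.add_re]
  -- reduce the entropy terms to sums over eigenvalues
  have hentρ : ((ρ * mlog ρ).trace).re = ∑ i, p i * Real.log (p i) := by
    rw [show mlog ρ = hρH.cfc Real.log from by simp only [mlog, dif_pos hρH],
      trace_mul_cfc hρH Real.log, ← Complex.ofReal_sum, Complex.ofReal_re]
  have hentA : ((ptraceB ρ * mlog (ptraceB ρ)).trace).re = ∑ m, q m * Real.log (q m) := by
    rw [show mlog (ptraceB ρ) = hA1.cfc Real.log from by simp only [mlog, dif_pos hA1],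
      trace_mul_cfc hA1 Real.log, ← Complex.ofReal_sum, Complex.ofReal_re]
  have hentB : ((ptraceA ρ * mlog (ptraceA ρ)).trace).re = ∑ n, r n * Real.log (r n) := by
    rw [show mlog (ptraceA ρ) = hB1.cfc Real.log from by simp only [mlog, dif_pos hB1],
      trace_mul_cfc hB1 Real.log, ← Complex.ofReal_sum, Complex.ofReal_re]
  -- main entropy inequality
  suffices hent : ∑ m, q m * Real.log (q m) + ∑ n, r n * Real.log (r n)
      ≤ ∑ i, p i * Real.log (p i) by
    simp only [freeEnergy, hentρ, hentA, hentB, henergy]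
    linarith
  -- set up the overlap matrix
  set K : Matrix (a × b) (a × b) ℂ := kron V W with hKdef
  set N : Matrix (a × b) (a × b) ℂ := star K * U with hNdef
  set c : (a × b) → (a × b) → ℝ := fun s i => Complex.normSq (N s i) with hcdef
  set d : (a × b) → ℝ := fun s => ∑ i, p i * c s i with hddef
  have hcnn : ∀ s i, 0 ≤ c s i := fun s i => Complex.normSq_nonneg _
  have hUu : star U * U = 1 := Unitary.coe_star_mul_self _
  have hUu' : U * star U = 1 := Unitary.coe_mul_star_self _
  have hVv : star V * V = 1 := Unitary.coe_star_mul_self _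
  have hVv' : V * star V = 1 := Unitary.coe_mul_star_self _
  have hWw : star W * W = 1 := Unitary.coe_star_mul_self _
  have hWw' : W * star W = 1 := Unitary.coe_mul_star_self _
  have hKK : star K * K = 1 := by
    rw [hKdef, kron_star, kron_mul, hVv, hWw, kron_one]
  have hKK' : K * star K = 1 := by
    rw [hKdef, kron_star, kron_mul, hVv', hWw', kron_one]
  have hNN' : N * star N = 1 := by
    rw [hNdef, star_mul, star_star,
      show star K * U * (star U * K) = star K * (U * star U) * K from by simp only [mul_assoc],
      hUu', mul_one, hKK]
  have hNsN : star N * N = 1 := by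
    rw [hNdef, star_mul, star_star,
      show star U * K * (star K * U) = star U * (K * star K) * U from by simp only [mul_assoc],
      hKK', mul_one, hUu]
  -- row sums of c
  have hrow : ∀ s, ∑ i, c s i = 1 := by
    intro s
    have h1 := conj_diag_apply N (fun _ => (1 : ℝ)) s
    rw [show Matrix.diagonal (fun _ : a × b => ((1 : ℝ) : ℂ)) = 1 from by
      simp, mul_one, hNN'] at h1
    have h2 : ((∑ i, (1 : ℝ) * c s i : ℝ) : ℂ) = 1 := by
      rw [← h1]; exact Matrix.one_apply_eq s
    have h3 : (∑ i, (1 : ℝ) * c s i) = 1 := by exact_mod_cast h2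
    simpa using h3
  -- column sums of c
  have hcol : ∀ i, ∑ s, c s i = 1 := by
    intro i
    have h : (star N * N) i i = (1 : Matrix (a × b) (a × b) ℂ) i i := by rw [hNsN]
    rw [Matrix.mul_apply, Matrix.one_apply_eq] at h
    have h2 : ∀ s : a × b, (star N) i s * N s i = ((c s i : ℝ) : ℂ) := by
      intro s
      rw [Matrix.star_apply, Complex.star_def, ← Complex.normSq_eq_conj_mul_self]
    rw [Finset.sum_congr rfl (fun s _ => h2 s)] at h
    exact_mod_cast h
  -- the diagonal of the conjugated density matrix
  have hspec : ρ = U * Matrix.diagonal (fun i => ((p i : ℝ) : ℂ)) * star U := by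
    have h := hρH.spectral_theorem
    rw [Unitary.conjStarAlgAut_apply] at h
    convert h using 3
    all_goals rfl
  have hdc : ∀ s, ((d s : ℝ) : ℂ) = (star K * ρ * K) s s := by
    intro s
    have h : star K * ρ * K = N * Matrix.diagonal (fun i => ((p i : ℝ) : ℂ)) * star N := by
      rw [hNdef, star_mul, star_star]
      conv_lhs => rw [hspec]
      simp only [mul_assoc]
    rw [h, conj_diag_apply]
  have hdnn : ∀ s, 0 ≤ d s := fun s =>
    Finset.sum_nonneg fun i _ => mul_nonneg (hpnn i) (hcnn s i)
  -- marginal sums of d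
  have hdiagA : star V * ptraceB ρ * V = Matrix.diagonal (fun m => ((q m : ℝ) : ℂ)) := by
    have h := hA1.conjStarAlgAut_star_eigenvectorUnitary
    rw [Unitary.conjStarAlgAut_apply, Unitary.coe_star, star_star] at h
    convert h using 2
    all_goals rfl
  have hdiagB : star W * ptraceA ρ * W = Matrix.diagonal (fun n => ((r n : ℝ) : ℂ)) := by
    have h := hB1.conjStarAlgAut_star_eigenvectorUnitary
    rw [Unitary.conjStarAlgAut_apply, Unitary.coe_star, star_star] at h
    convert h using 2
    all_goals rfl
  have hdq : ∀ m, ∑ n, d (m, n) = q m := by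
    intro m
    have hP : ptraceB (star K * ρ * K) = star V * ptraceB ρ * V := ptraceB_conj V W hWw' ρ
    have h1 : ((∑ n, d (m, n) : ℝ) : ℂ) = ((q m : ℝ) : ℂ) := by
      push_cast
      rw [Finset.sum_congr rfl (fun n _ => by push_cast at hdc ⊢; exact hdc (m, n))]
      have h2 : ∑ n, (star K * ρ * K) (m, n) (m, n) = ptraceB (star K * ρ * K) m m := rfl
      rw [h2, hP, hdiagA, Matrix.diagonal_apply_eq]
    exact_mod_cast h1
  have hdr : ∀ n, ∑ m, d (m, n) = r n := by
    intro n
    have hP : ptraceA (star K * ρ * K) = star W * ptraceA ρ * W := ptraceA_conj V W hVv' ρ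
    have h1 : ((∑ m, d (m, n) : ℝ) : ℂ) = ((r n : ℝ) : ℂ) := by
      push_cast
      rw [Finset.sum_congr rfl (fun m _ => by push_cast at hdc ⊢; exact hdc (m, n))]
      have h2 : ∑ m, (star K * ρ * K) (m, n) (m, n) = ptraceA (star K * ρ * K) n n := rfl
      rw [h2, hP, hdiagB, Matrix.diagonal_apply_eq]
    exact_mod_cast h1
  have hqnn : ∀ m, 0 ≤ q m := fun m => (hdq m) ▸ Finset.sum_nonneg fun n _ => hdnn _
  have hrnn : ∀ n, 0 ≤ r n := fun n => (hdr n) ▸ Finset.sum_nonneg fun m _ => hdnn _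
  -- normalization
  have hsp : ∑ i, p i = 1 := by
    have h := trace_eq_sum_eigenvalues hρH
    rw [hρ1] at h
    exact_mod_cast h.symm
  have hsd : ∑ s, d s = 1 := by
    calc ∑ s, d s = ∑ i, ∑ s, p i * c s i := Finset.sum_comm
    _ = ∑ i, p i * ∑ s, c s i := by
        refine Finset.sum_congr rfl fun i _ => ?_; rw [Finset.mul_sum]
    _ = ∑ i, p i := by simp [hcol]
    _ = 1 := hsp
  have hsq : ∑ m, q m = 1 := by
    calc ∑ m, q m = ∑ m, ∑ n, d (m, n) := Finset.sum_congr rfl fun m _ => (hdq m).symm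
    _ = ∑ s : a × b, d s := (Fintype.sum_prod_type _).symm
    _ = 1 := hsd
  have hsr : ∑ n, r n = 1 := by
    calc ∑ n, r n = ∑ n, ∑ m, d (m, n) := Finset.sum_congr rfl fun n _ => (hdr n).symm
    _ = ∑ m, ∑ n, d (m, n) := Finset.sum_comm
    _ = ∑ s : a × b, d s := (Fintype.sum_prod_type _).symm
    _ = 1 := hsd
  -- pointwise Klein-type inequality
  have hdeg : ∀ s i, d s = 0 →
      c s i * p i * (Real.log (q s.1) + Real.log (r s.2))
        + (c s i * p i - c s i * (q s.1 * r s.2))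
        ≤ c s i * (p i * Real.log (p i)) := by
    intro s i hd0
    have hterm : p i * c s i = 0 :=
      (Finset.sum_eq_zero_iff_of_nonneg
        (fun j _ => mul_nonneg (hpnn j) (hcnn s j))).mp hd0 i (Finset.mem_univ i)
    have h1 : c s i * p i = 0 := by rw [mul_comm]; exact hterm
    have h2 : c s i * (p i * Real.log (p i)) = 0 := by
      rcases mul_eq_zero.mp hterm with h | h
      · simp [h]
      · simp [h]
    have h3 : 0 ≤ c s i * (q s.1 * r s.2) :=
      mul_nonneg (hcnn s i) (mul_nonneg (hqnn s.1) (hrnn s.2))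
    rw [h1, h2]
    simp only [zero_mul, zero_sub, zero_add]
    linarith
  have key : ∀ s i,
      c s i * p i * (Real.log (q s.1) + Real.log (r s.2))
        + (c s i * p i - c s i * (q s.1 * r s.2))
        ≤ c s i * (p i * Real.log (p i)) := by
    intro s i
    by_cases hq : 0 < q s.1
    · by_cases hr : 0 < r s.2
      · have hy : 0 < q s.1 * r s.2 := mul_pos hq hr
        have hlog : Real.log (q s.1) + Real.log (r s.2) = Real.log (q s.1 * r s.2) :=
          (Real.log_mul hq.ne' hr.ne').symm
        rw [hlog]
        have hscalar := scalar_klein (hpnn i) hy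
        calc c s i * p i * Real.log (q s.1 * r s.2)
            + (c s i * p i - c s i * (q s.1 * r s.2))
            = c s i * (p i * Real.log (q s.1 * r s.2) + (p i - q s.1 * r s.2)) := by ring
        _ ≤ c s i * (p i * Real.log (p i)) := mul_le_mul_of_nonneg_left hscalar (hcnn s i)
      · -- r s.2 = 0
        have hr0 : r s.2 = 0 := le_antisymm (not_lt.mp hr) (hrnn s.2)
        have hd0 : d s = 0 := by
          have hz : ∑ m, d (m, s.2) = 0 := by rw [hdr]; exact hr0
          have := (Finset.sum_eq_zero_iff_of_nonneg (fun m _ => hdnn _)).mp hz s.1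
            (Finset.mem_univ s.1)
          simpa using this
        exact hdeg s i hd0
    · have hq0 : q s.1 = 0 := le_antisymm (not_lt.mp hq) (hqnn s.1)
      have hd0 : d s = 0 := by
        have hz : ∑ n, d (s.1, n) = 0 := by rw [hdq]; exact hq0
        have := (Finset.sum_eq_zero_iff_of_nonneg (fun n _ => hdnn _)).mp hz s.2
          (Finset.mem_univ s.2)
        simpa using this
      exact hdeg s i hd0
  -- assembling the sums
  have sum1 : ∑ m, q m * Real.log (q m) = ∑ s : a × b, d s * Real.log (q s.1) := by
    rw [Fintype.sum_prod_type]
    refine Finset.sum_congr rfl fun m _ => ?_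
    calc q m * Real.log (q m) = (∑ n, d (m, n)) * Real.log (q m) := by rw [hdq m]
    _ = ∑ n, d (m, n) * Real.log (q m) := Finset.sum_mul _ _ _
  have sum2 : ∑ n, r n * Real.log (r n) = ∑ s : a × b, d s * Real.log (r s.2) := by
    have : ∑ s : a × b, d s * Real.log (r s.2)
        = ∑ n, ∑ m, d (m, n) * Real.log (r n) := by
      rw [Fintype.sum_prod_type]
      exact Finset.sum_comm
    rw [this]
    refine Finset.sum_congr rfl fun n _ => ?_
    calc r n * Real.log (r n) = (∑ m, d (m, n)) * Real.log (r n) := by rw [hdr n]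
    _ = ∑ m, d (m, n) * Real.log (r n) := Finset.sum_mul _ _ _
  have sumA : ∀ s : a × b, d s * (Real.log (q s.1) + Real.log (r s.2))
      = ∑ i, c s i * p i * (Real.log (q s.1) + Real.log (r s.2)) := by
    intro s
    rw [hddef]
    simp only [Finset.sum_mul]
    exact Finset.sum_congr rfl fun i _ => by ring
  have sumcorr : ∑ s : a × b, ∑ i, (c s i * p i - c s i * (q s.1 * r s.2)) = 0 := by
    have e1 : ∀ s : a × b, ∑ i, c s i * p i = d s := by
      intro s
      rw [hddef]
      exact Finset.sum_congr rfl fun i _ => mul_comm _ _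
    have e2 : ∀ s : a × b, ∑ i : a × b, c s i * (q s.1 * r s.2) = q s.1 * r s.2 := by
      intro s
      rw [← Finset.sum_mul, hrow, one_mul]
    calc ∑ s : a × b, ∑ i, (c s i * p i - c s i * (q s.1 * r s.2))
        = ∑ s : a × b, (d s - q s.1 * r s.2) := by
          refine Finset.sum_congr rfl fun s _ => ?_
          rw [Finset.sum_sub_distrib, e1, e2]
    _ = (∑ s : a × b, d s) - ∑ s : a × b, q s.1 * r s.2 := by rw [Finset.sum_sub_distrib]
    _ = 1 - (∑ m, q m) * (∑ n, r n) := by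
        rw [hsd]
        congr 1
        rw [Finset.sum_mul_sum, Fintype.sum_prod_type]
    _ = 0 := by rw [hsq, hsr]; ring
  have final : ∑ s : a × b, ∑ i, c s i * (p i * Real.log (p i))
      = ∑ i, p i * Real.log (p i) := by
    rw [Finset.sum_comm]
    refine Finset.sum_congr rfl fun i _ => ?_
    rw [← Finset.sum_mul, hcol, one_mul]
  have main := Finset.sum_le_sum (s := Finset.univ)
    (fun s (_ : s ∈ Finset.univ) => Finset.sum_le_sum
      (fun i (_ : i ∈ Finset.univ) => key s i))
  rw [sum1, sum2]
  calc ∑ s : a × b, d s * Real.log (q s.1) + ∑ s : a × b, d s * Real.log (r s.2)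
      = ∑ s : a × b, d s * (Real.log (q s.1) + Real.log (r s.2)) := by
        rw [← Finset.sum_add_distrib]
        exact Finset.sum_congr rfl fun s _ => by ring
  _ = ∑ s : a × b, ∑ i, c s i * p i * (Real.log (q s.1) + Real.log (r s.2)) :=
        Finset.sum_congr rfl fun s _ => sumA s
  _ = ∑ s : a × b, ∑ i, (c s i * p i * (Real.log (q s.1) + Real.log (r s.2))
        + (c s i * p i - c s i * (q s.1 * r s.2))) := by
        rw [show (∑ s : a × b, ∑ i, (c s i * p i * (Real.log (q s.1) + Real.log (r s.2))
          + (c s i * p i - c s i * (q s.1 * r s.2))))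
          = ∑ s : a × b, ∑ i, c s i * p i * (Real.log (q s.1) + Real.log (r s.2))
            + ∑ s : a × b, ∑ i, (c s i * p i - c s i * (q s.1 * r s.2)) from by
          rw [← Finset.sum_add_distrib]
          exact Finset.sum_congr rfl fun s _ => by rw [← Finset.sum_add_distrib]]
        rw [sumcorr, add_zero]
  _ ≤ ∑ s : a × b, ∑ i, c s i * (p i * Real.log (p i)) := main
  _ = ∑ i, p i * Real.log (p i) := final
end

section
/- Let ℋ_A, ℋ_B be finite-dimensional Hilbert spaces and let ρ, ρ' be density matrices on ℋ_A ⊗ ℋ_B with ρ' positive definite. Then the relative entropies of the marginals satisfy monotonicity under partial trace: Tr(ρ_A(log ρ_A − log ρ'_A)) ≤ Tr(ρ(log ρ − log ρ')), where ρ_A = Tr_B ρ and ρ'_A = Tr_B ρ'. Consequently S(ρ_A) + Tr(ρ_A log ρ'_A) ≥ S(ρ) + Tr(ρ log ρ'), where S denotes von Neumann entropy. -/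
open scoped ComplexOrder

/-- Von Neumann entropy `S(ρ) = -Tr(ρ log ρ)`. -/
noncomputable def vnEntropy {n : Type*} [Fintype n] [DecidableEq n]
    (ρ : Matrix n n ℂ) : ℝ :=
  -((ρ * mlog ρ).trace).re

open scoped Kronecker
open Complex Matrix Filter Real Topology

set_option linter.unusedSectionVars false
set_option linter.unusedVariables false
set_option maxHeartbeats 1000000

namespace DPIAux

variable {a b : Type*} [Fintype a] [DecidableEq a] [Fintype b] [DecidableEq b]

/-- embed a vector on `a` as a vector on `a × b` supported on column `k` -/
def emb (x : a → ℂ) (k : b) : a × b → ℂ := fun p => if p.2 = k then x p.1 else 0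

lemma ptraceB_quadform (M : Matrix (a×b) (a×b) ℂ) (x : a → ℂ) :
    star x ⬝ᵥ ((ptraceB M) *ᵥ x) = ∑ k : b, star (emb x k) ⬝ᵥ (M *ᵥ emb x k) := by
  calc star x ⬝ᵥ ((ptraceB M) *ᵥ x)
      = ∑ i, ∑ k, ∑ j, star (x i) * (M (i,k) (j,k) * x j) := by
        simp only [dotProduct, mulVec, ptraceB, Matrix.of_apply, Pi.star_apply,
          Finset.mul_sum, Finset.sum_mul]
        refine Finset.sum_congr rfl fun i _ => ?_
        rw [Finset.sum_comm]
    _ = ∑ k, ∑ i, ∑ j, star (x i) * (M (i,k) (j,k) * x j) := Finset.sum_comm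
    _ = ∑ k : b, star (emb x k) ⬝ᵥ (M *ᵥ emb x k) := by
        refine Finset.sum_congr rfl fun k _ => ?_
        simp only [dotProduct, mulVec, emb, Pi.star_apply, Fintype.sum_prod_type]
        simp [apply_ite, mul_ite, ite_mul, mul_zero, zero_mul, star_zero,
          Finset.sum_ite_eq', Finset.mul_sum]

lemma ptraceB_isHermitian {M : Matrix (a×b) (a×b) ℂ} (h : M.IsHermitian) :
    (ptraceB M).IsHermitian := by
  ext i j
  simp only [conjTranspose_apply, ptraceB, Matrix.of_apply, star_sum]
  refine Finset.sum_congr rfl fun k _ => ?_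
  have := congrFun (congrFun h (i,k)) (j,k)
  simpa [conjTranspose_apply] using this

lemma ptraceB_posSemidef {M : Matrix (a×b) (a×b) ℂ} (h : M.PosSemidef) :
    (ptraceB M).PosSemidef := by
  refine Matrix.PosSemidef.of_dotProduct_mulVec_nonneg (ptraceB_isHermitian h.1) fun x => ?_
  rw [ptraceB_quadform]
  exact Finset.sum_nonneg fun k _ => h.dotProduct_mulVec_nonneg _

lemma ptraceB_posDef [Nonempty b] {M : Matrix (a×b) (a×b) ℂ} (h : M.PosDef) :
    (ptraceB M).PosDef := by
  refine Matrix.PosDef.of_dotProduct_mulVec_pos (ptraceB_isHermitian h.1) fun x hx => ?_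
  rw [ptraceB_quadform]
  obtain ⟨k0⟩ := ‹Nonempty b›
  have hk0 : emb x k0 ≠ 0 := by
    obtain ⟨i, hi⟩ := Function.ne_iff.mp hx
    exact Function.ne_iff.mpr ⟨(i, k0), by simpa [emb] using hi⟩
  refine Finset.sum_pos' (fun k _ => h.posSemidef.dotProduct_mulVec_nonneg _) ⟨k0, Finset.mem_univ _, h.dotProduct_mulVec_pos hk0⟩

lemma ptraceB_trace (M : Matrix (a×b) (a×b) ℂ) : (ptraceB M).trace = M.trace := by
  simp [trace, ptraceB, Matrix.diag, Fintype.sum_prod_type]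

lemma trace_kron_mul (M : Matrix a a ℂ) (N : Matrix (a×b) (a×b) ℂ) :
    ((M ⊗ₖ (1 : Matrix b b ℂ)) * N).trace = (M * ptraceB N).trace := by
  calc ((M ⊗ₖ (1 : Matrix b b ℂ)) * N).trace
      = ∑ i, ∑ k, ∑ j, M i j * N (j,k) (i,k) := by
        simp only [trace, Matrix.diag, Matrix.mul_apply, Fintype.sum_prod_type,
          kroneckerMap_apply, Matrix.one_apply, mul_ite, mul_one, mul_zero, ite_mul, zero_mul]
        refine Finset.sum_congr rfl fun i _ => Finset.sum_congr rfl fun k _ => ?_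
        refine Finset.sum_congr rfl fun j _ => ?_
        simp [Finset.sum_ite_eq']
    _ = ∑ i, ∑ j, ∑ k, M i j * N (j,k) (i,k) :=
        Finset.sum_congr rfl fun i _ => Finset.sum_comm
    _ = (M * ptraceB N).trace := by
        simp [trace, Matrix.diag, Matrix.mul_apply, ptraceB, Finset.mul_sum]



section Scalar
variable {ι : Type*} [Fintype ι]

/-- antiderivative appearing in the integral representation of `x log x` -/
noncomputable def Phi (c p q : ι → ℝ) (t : ℝ) : ℝ :=
  ∑ i, c i * (q i * Real.log (1 + t) - p i * Real.log (p i + t * q i))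

/-- resolvent-type quantity -/
noncomputable def Rt (c p q : ι → ℝ) (t : ℝ) : ℝ :=
  ∑ i, c i * (q i) ^ 2 / (p i + t * q i)

variable {c p q : ι → ℝ}

lemma phi_hasDerivAt (hp : ∀ i, 0 ≤ p i) (hq : ∀ i, 0 < q i)
    (hcp : ∑ i, c i * p i = 1) (hcq : ∑ i, c i * q i = 1)
    {t : ℝ} (ht : 0 < t) :
    HasDerivAt (Phi c p q) (1 / (1 + t) - 1 + t * Rt c p q t) t := by
  have hden : ∀ i, p i + t * q i > 0 := fun i =>
    add_pos_of_nonneg_of_pos (hp i) (mul_pos ht (hq i))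
  have h1t : (1 : ℝ) + t > 0 := by linarith
  have H : HasDerivAt (Phi c p q)
      (∑ i, c i * (q i * (1 / (1 + t)) - p i * (q i / (p i + t * q i)))) t := by
    apply HasDerivAt.fun_sum
    intro i _
    have hlog1 : HasDerivAt (fun t : ℝ => Real.log (1 + t)) (1 / (1 + t)) t := by
      simpa using ((hasDerivAt_id t).const_add 1).log (by simpa using ne_of_gt h1t)
    have hlog2 : HasDerivAt (fun t : ℝ => Real.log (p i + t * q i)) (q i / (p i + t * q i)) t := by
      simpa using (((hasDerivAt_id t).mul_const (q i)).const_add (p i)).log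
        (by simpa using ne_of_gt (hden i))
    exact ((hlog1.const_mul (q i)).sub (hlog2.const_mul (p i))).const_mul (c i)
  convert H using 1
  have key : ∀ i, c i * (q i * (1 / (1 + t)) - p i * (q i / (p i + t * q i)))
      = c i * q i * (1 / (1 + t)) - (c i * q i - t * (c i * q i ^ 2 / (p i + t * q i))) := by
    intro i
    have h := ne_of_gt (hden i)
    have e : p i * (q i / (p i + t * q i)) = q i - t * (q i ^ 2 / (p i + t * q i)) := by
      rw [eq_sub_iff_add_eq, ← mul_div_assoc, ← mul_div_assoc, ← add_div, div_eq_iff h]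
      ring
    rw [e]
    ring
  rw [Finset.sum_congr rfl fun i _ => key i]
  rw [Finset.sum_sub_distrib, ← Finset.sum_mul, hcq, Finset.sum_sub_distrib, hcq,
    ← Finset.mul_sum]
  simp only [Rt]
  ring

lemma phi_continuousOn (hp : ∀ i, 0 ≤ p i) (hq : ∀ i, 0 < q i) :
    ContinuousOn (Phi c p q) (Set.Ici 0) := by
  apply continuousOn_finset_sum
  intro i _
  by_cases hp0 : p i = 0
  · simp only [hp0, zero_mul, sub_zero, zero_add]
    apply ContinuousOn.mul continuousOn_const
    apply ContinuousOn.mul continuousOn_const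
    exact ContinuousOn.log (by fun_prop) fun x hx => by
      have : (0:ℝ) ≤ x := hx
      intro h; linarith
  · have hpi : 0 < p i := lt_of_le_of_ne (hp i) (Ne.symm hp0)
    apply ContinuousOn.mul continuousOn_const
    apply ContinuousOn.sub
    · apply ContinuousOn.mul continuousOn_const
      exact ContinuousOn.log (by fun_prop) fun x hx => by
        have : (0:ℝ) ≤ x := hx
        intro h; linarith
    · apply ContinuousOn.mul continuousOn_const
      refine ContinuousOn.log (by fun_prop) fun x hx => ?_
      have hx0 : (0:ℝ) ≤ x := hx
      have : 0 < p i + x * q i :=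
        add_pos_of_pos_of_nonneg hpi (mul_nonneg hx0 (hq i).le)
      exact ne_of_gt this

lemma phi_zero : Phi c p q 0 = -∑ i, c i * (p i * Real.log (p i)) := by
  simp [Phi, Finset.sum_neg_distrib]

lemma phi_tendsto (hp : ∀ i, 0 ≤ p i) (hq : ∀ i, 0 < q i)
    (hcp : ∑ i, c i * p i = 1) (hcq : ∑ i, c i * q i = 1) :
    Tendsto (Phi c p q) atTop (𝓝 (-∑ i, c i * (p i * Real.log (q i)))) := by
  have hrw : ∀ t : ℝ, Phi c p q t
      = ∑ i, c i * (p i * (Real.log (1 + t) - Real.log (p i + t * q i))) := by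
    intro t
    have h : ∀ i, c i * (q i * Real.log (1 + t) - p i * Real.log (p i + t * q i))
        = c i * (p i * (Real.log (1 + t) - Real.log (p i + t * q i)))
          + (c i * q i - c i * p i) * Real.log (1 + t) := fun i => by ring
    rw [Phi, Finset.sum_congr rfl fun i _ => h i, Finset.sum_add_distrib, ← Finset.sum_mul,
      Finset.sum_sub_distrib, hcp, hcq]
    ring
  refine Tendsto.congr (fun t => (hrw t).symm) ?_
  rw [← Finset.sum_neg_distrib]
  apply tendsto_finset_sum
  intro i _
  by_cases hp0 : p i = 0
  · simpa [hp0] using tendsto_const_nhds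
  · have hpi : 0 < p i := lt_of_le_of_ne (hp i) (Ne.symm hp0)
    have h1 : Tendsto (fun t : ℝ => (1 + t) / (p i + t * q i)) atTop (𝓝 ((q i)⁻¹)) := by
      have hnum : Tendsto (fun t : ℝ => t⁻¹ + 1) atTop (𝓝 (0 + 1)) :=
        tendsto_inv_atTop_zero.add tendsto_const_nhds
      have hden : Tendsto (fun t : ℝ => p i * t⁻¹ + q i) atTop (𝓝 (p i * 0 + q i)) :=
        (tendsto_const_nhds.mul tendsto_inv_atTop_zero).add tendsto_const_nhds
      have := hnum.div hden (by simpa using (hq i).ne')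
      simp only [mul_zero, zero_add] at this
      refine Tendsto.congr' ?_ (by simpa [one_div] using this)
      filter_upwards [eventually_gt_atTop (0:ℝ)] with t ht
      have ht0 : t ≠ 0 := ne_of_gt ht
      rw [Pi.div_apply]
      field_simp
    have h2 : Tendsto (fun t : ℝ => Real.log ((1 + t) / (p i + t * q i))) atTop
        (𝓝 (Real.log ((q i)⁻¹))) := h1.log (inv_ne_zero (hq i).ne')
    have h3 : Tendsto (fun t : ℝ => c i * (p i * (Real.log (1 + t) - Real.log (p i + t * q i))))
        atTop (𝓝 (c i * (p i * Real.log ((q i)⁻¹)))) := by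
      apply Tendsto.const_mul
      apply Tendsto.const_mul
      refine Tendsto.congr' ?_ h2
      filter_upwards [eventually_gt_atTop (0:ℝ)] with t ht
      rw [Real.log_div (by linarith) (ne_of_gt (add_pos_of_pos_of_nonneg hpi (mul_nonneg ht.le (hq i).le)))]
    simpa [Real.log_inv, mul_neg] using h3

lemma scalar_main {κ : Type*} [Fintype κ]
    {c' p' q' : κ → ℝ}
    (hp : ∀ i, 0 ≤ p i) (hq : ∀ i, 0 < q i)
    (hcp : ∑ i, c i * p i = 1) (hcq : ∑ i, c i * q i = 1)
    (hp' : ∀ k, 0 ≤ p' k) (hq' : ∀ k, 0 < q' k)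
    (hcp' : ∑ k, c' k * p' k = 1) (hcq' : ∑ k, c' k * q' k = 1)
    (hR : ∀ t : ℝ, 0 < t → Rt c' p' q' t ≤ Rt c p q t) :
    (-∑ i, c i * (p i * Real.log (p i))) - (-∑ k, c' k * (p' k * Real.log (p' k)))
      ≤ (-∑ i, c i * (p i * Real.log (q i))) - (-∑ k, c' k * (p' k * Real.log (q' k))) := by
  set D : ℝ → ℝ := fun t => Phi c p q t - Phi c' p' q' t with hD
  have hderiv : ∀ x ∈ Set.Ioi (0:ℝ), HasDerivAt D
      ((1 / (1 + x) - 1 + x * Rt c p q x) - (1 / (1 + x) - 1 + x * Rt c' p' q' x)) x :=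
    fun x hx => (phi_hasDerivAt hp hq hcp hcq hx).sub (phi_hasDerivAt hp' hq' hcp' hcq' hx)
  have hmono : MonotoneOn D (Set.Ici 0) := by
    apply monotoneOn_of_deriv_nonneg (convex_Ici 0)
      ((phi_continuousOn hp hq).sub (phi_continuousOn hp' hq'))
    · rw [interior_Ici]
      exact fun x hx => (hderiv x hx).differentiableAt.differentiableWithinAt
    · rw [interior_Ici]
      intro x hx
      rw [show deriv (Phi c p q - Phi c' p' q') x = deriv D x from rfl, (hderiv x hx).deriv]
      have := hR x hx
      have hx0 : (0:ℝ) < x := hx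
      nlinarith
  have htend : Tendsto D atTop
      (𝓝 ((-∑ i, c i * (p i * Real.log (q i))) - (-∑ k, c' k * (p' k * Real.log (q' k))))) :=
    (phi_tendsto hp hq hcp hcq).sub (phi_tendsto hp' hq' hcp' hcq')
  have h0 : D 0 = (-∑ i, c i * (p i * Real.log (p i))) - (-∑ k, c' k * (p' k * Real.log (p' k))) := by
    simp [hD, phi_zero]
  have := ge_of_tendsto htend ((eventually_ge_atTop (0:ℝ)).mono fun t ht =>
    hmono Set.self_mem_Ici ht ht)
  rw [h0] at this
  exact this


end Scalar

section MatrixHelpers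
variable {n : Type*} [Fintype n] [DecidableEq n]

/-- diagonal matrix with real entries -/
noncomputable def rd (d : n → ℝ) : Matrix n n ℂ := Matrix.diagonal (fun i => (d i : ℂ))

lemma rd_mul_rd (d e : n → ℝ) : rd d * rd e = rd (fun i => d i * e i) := by
  simp [rd, diagonal_mul_diagonal]

lemma rd_conjT (d : n → ℝ) : (rd d)ᴴ = rd d := by
  simp [rd, diagonal_conjTranspose, Function.comp, Complex.conj_ofReal]

lemma rd_one : rd (fun _ : n => (1:ℝ)) = 1 := by simp [rd]

lemma tri_conjT (U V M : Matrix n n ℂ) : (U * M * Vᴴ)ᴴ = V * Mᴴ * Uᴴ := by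
  simp [conjTranspose_mul, Matrix.mul_assoc]

lemma tri_mul_tri (U V W M N : Matrix n n ℂ) (hV : Vᴴ * V = 1) :
    (U * M * Vᴴ) * (V * N * Wᴴ) = U * (M * N) * Wᴴ := by
  have h : Vᴴ * (V * (N * Wᴴ)) = N * Wᴴ := by
    rw [← Matrix.mul_assoc, hV, Matrix.one_mul]
  simp only [Matrix.mul_assoc, h]

lemma trace_conj (V X : Matrix n n ℂ) (hV : Vᴴ * V = 1) :
    (V * X * Vᴴ).trace = X.trace := by
  rw [Matrix.trace_mul_cycle, hV, Matrix.one_mul]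

lemma sand_mul_sand (V : Matrix n n ℂ) (hV : Vᴴ * V = 1) (d e : n → ℝ) :
    (V * rd d * Vᴴ) * (V * rd e * Vᴴ) = V * rd (fun i => d i * e i) * Vᴴ := by
  rw [tri_mul_tri _ _ _ _ _ hV, rd_mul_rd]

lemma sand_conjT (V : Matrix n n ℂ) (d : n → ℝ) : (V * rd d * Vᴴ)ᴴ = V * rd d * Vᴴ := by
  rw [tri_conjT, rd_conjT]

lemma trace_conjT_mul_mul_diagonal (M K : Matrix n n ℂ) (d : n → ℂ) :
    (Mᴴ * K * Matrix.diagonal d).trace = ∑ j, ∑ i, star (M i j) * K i j * d j := by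
  have h1 : (Mᴴ * K * Matrix.diagonal d).trace = ∑ j, (Mᴴ * K) j j * d j := by
    simp [trace, Matrix.diag, mul_diagonal]
  rw [h1]
  simp only [Matrix.mul_apply, conjTranspose_apply, Finset.sum_mul, RCLike.star_def]

lemma psd_trace_re_nonneg {M : Matrix n n ℂ} (h : M.PosSemidef) : 0 ≤ M.trace.re := by
  have hd : ∀ i, 0 ≤ M i i := by
    intro i
    have h2 := h.dotProduct_mulVec_nonneg (Pi.single i 1)
    simpa [dotProduct, mulVec, Pi.single_apply] using h2
  have : (0:ℂ) ≤ M.trace := Finset.sum_nonneg fun i _ => hd i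
  exact (Complex.le_def.mp this).1

lemma kron_one_conjT {a b : Type*} [Fintype a] [Fintype b] [DecidableEq b]
    (A : Matrix a a ℂ) : (A ⊗ₖ (1 : Matrix b b ℂ))ᴴ = Aᴴ ⊗ₖ (1 : Matrix b b ℂ) := by
  ext ⟨i,k⟩ ⟨j,l⟩
  by_cases h : k = l <;>
    simp [conjTranspose_apply, kroneckerMap_apply, Matrix.one_apply, h, eq_comm]


lemma star_mul_real_mul (z : ℂ) (r s : ℝ) :
    star (z * (r:ℂ)) * z * (s:ℂ) = ((Complex.normSq z * (r * s) : ℝ) : ℂ) := by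
  push_cast
  rw [Complex.normSq_eq_conj_mul_self]
  simp only [star_mul', RCLike.star_def, Complex.conj_ofReal]
  ring

lemma star_mul_mul_real (z : ℂ) (r s : ℝ) :
    star z * (z * (r:ℂ)) * (s:ℂ) = ((Complex.normSq z * (r * s) : ℝ) : ℂ) := by
  push_cast
  rw [Complex.normSq_eq_conj_mul_self]
  simp only [RCLike.star_def]
  ring

lemma unitary_coe_facts (U : Matrix.unitaryGroup n ℂ) :
    (U : Matrix n n ℂ)ᴴ * (U : Matrix n n ℂ) = 1
      ∧ (U : Matrix n n ℂ) * (U : Matrix n n ℂ)ᴴ = 1 := by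
  refine ⟨?_, ?_⟩
  · rw [← Matrix.star_eq_conjTranspose]
    exact Unitary.star_mul_self_of_mem U.2
  · rw [← Matrix.star_eq_conjTranspose]
    exact Unitary.mul_star_self_of_mem U.2

lemma spectral' {A : Matrix n n ℂ} (hA : A.IsHermitian) :
    A = (Matrix.IsHermitian.eigenvectorUnitary hA : Matrix n n ℂ) * rd hA.eigenvalues
      * (Matrix.IsHermitian.eigenvectorUnitary hA : Matrix n n ℂ)ᴴ := by
  conv_lhs => rw [hA.spectral_theorem]
  rw [← Matrix.star_eq_conjTranspose]
  rfl

lemma mlog_eq {A : Matrix n n ℂ} (hA : A.IsHermitian) :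
    mlog A = (Matrix.IsHermitian.eigenvectorUnitary hA : Matrix n n ℂ)
      * rd (fun i => Real.log (hA.eigenvalues i))
      * (Matrix.IsHermitian.eigenvectorUnitary hA : Matrix n n ℂ)ᴴ := by
  rw [mlog, dif_pos hA, ← Matrix.star_eq_conjTranspose]
  rfl

lemma trace_rd (d : n → ℝ) : (rd d).trace = ((∑ i, d i : ℝ) : ℂ) := by
  simp [rd, Matrix.trace_diagonal]

lemma sum_eigenvalues_eq {A : Matrix n n ℂ} (hA : A.IsHermitian) :
    ((∑ i, hA.eigenvalues i : ℝ) : ℂ) = A.trace := by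
  conv_rhs => rw [spectral' hA]
  rw [trace_conj _ _ (unitary_coe_facts _).1, trace_rd]

lemma trace_dKeK (K : Matrix n n ℂ) (d e : n → ℝ) :
    (rd d * K * rd e * Kᴴ).trace
      = ∑ i, ∑ j, ((d i * e j * Complex.normSq (K i j) : ℝ) : ℂ) := by
  have h : ∀ i j, (rd d * K * rd e) i j = (d i : ℂ) * K i j * (e j : ℂ) := by
    intro i j
    simp [rd, Matrix.diagonal_mul, Matrix.mul_diagonal]
  simp only [trace, Matrix.diag, Matrix.mul_apply, conjTranspose_apply, h]
  refine Finset.sum_congr rfl fun i _ => Finset.sum_congr rfl fun j _ => ?_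
  push_cast
  rw [Complex.normSq_eq_conj_mul_self]
  simp only [RCLike.star_def]
  ring

lemma trace_sand_sand (U V : Matrix n n ℂ) (d e : n → ℝ) :
    ((U * rd d * Uᴴ) * (V * rd e * Vᴴ)).trace
      = (rd d * (Uᴴ * V) * rd e * (Uᴴ * V)ᴴ).trace := by
  have h1 : (U * rd d * Uᴴ) * (V * rd e * Vᴴ)
      = U * (rd d * (Uᴴ * (V * (rd e * Vᴴ)))) := by simp only [Matrix.mul_assoc]
  rw [h1, Matrix.trace_mul_comm]
  have h2 : rd d * (Uᴴ * (V * (rd e * Vᴴ))) * U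
      = rd d * (Uᴴ * V) * rd e * (Uᴴ * V)ᴴ := by
    rw [conjTranspose_mul, conjTranspose_conjTranspose]
    simp only [Matrix.mul_assoc]
  rw [h2]

lemma row_sum_normSq {K : Matrix n n ℂ} (hK : K * Kᴴ = 1) (i : n) :
    ∑ j, Complex.normSq (K i j) = 1 := by
  have h := congrFun (congrFun hK i) i
  rw [Matrix.mul_apply, Matrix.one_apply_eq] at h
  have h2 : ∑ j, ((Complex.normSq (K i j) : ℝ) : ℂ) = 1 := by
    rw [← h]
    refine Finset.sum_congr rfl fun j _ => ?_
    rw [conjTranspose_apply]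
    exact (Complex.mul_conj _).symm
  have := congrArg Complex.re h2
  simpa using this

lemma col_sum_normSq {K : Matrix n n ℂ} (hK : Kᴴ * K = 1) (j : n) :
    ∑ i, Complex.normSq (K i j) = 1 := by
  have h := congrFun (congrFun hK j) j
  rw [Matrix.mul_apply, Matrix.one_apply_eq] at h
  have h2 : ∑ i, ((Complex.normSq (K i j) : ℝ) : ℂ) = 1 := by
    rw [← h]
    refine Finset.sum_congr rfl fun i _ => ?_
    rw [conjTranspose_apply, RCLike.star_def]
    rw [Complex.normSq_eq_conj_mul_self]
  have := congrArg Complex.re h2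
  simpa using this

end MatrixHelpers

section Resolvent

variable {a b : Type*} [Fintype a] [DecidableEq a] [Fintype b] [DecidableEq b]

lemma resolvent_mono
    (ρ ρ' : Matrix (a×b) (a×b) ℂ) (hρ : ρ.PosSemidef)
    (U Vu : Matrix (a×b) (a×b) ℂ) (p q : a×b → ℝ)
    (hU1 : Uᴴ * U = 1) (hU2 : U * Uᴴ = 1) (hV1 : Vuᴴ * Vu = 1) (hV2 : Vu * Vuᴴ = 1)
    (hp : ∀ i, 0 ≤ p i) (hq : ∀ i, 0 < q i)
    (hρd : ρ = U * rd p * Uᴴ) (hσd : ρ' = Vu * rd q * Vuᴴ)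
    (U2 V2 : Matrix a a ℂ) (p2 q2 : a → ℝ)
    (hU21 : U2ᴴ * U2 = 1) (hU22 : U2 * U2ᴴ = 1) (hV21 : V2ᴴ * V2 = 1) (hV22 : V2 * V2ᴴ = 1)
    (hp2 : ∀ k, 0 ≤ p2 k) (hq2 : ∀ k, 0 < q2 k)
    (hρAd : ptraceB ρ = U2 * rd p2 * U2ᴴ) (hσAd : ptraceB ρ' = V2 * rd q2 * V2ᴴ)
    {t : ℝ} (ht : 0 < t) :
    Rt (fun kl : a × a => Complex.normSq ((U2ᴴ * V2) kl.1 kl.2)) (fun kl => p2 kl.1)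
        (fun kl => q2 kl.2) t
      ≤ Rt (fun ij : (a×b) × (a×b) => Complex.normSq ((Uᴴ * Vu) ij.1 ij.2)) (fun ij => p ij.1)
        (fun ij => q ij.2) t := by
  set K : Matrix (a×b) (a×b) ℂ := Uᴴ * Vu with hK
  set K2 : Matrix a a ℂ := U2ᴴ * V2 with hK2
  set RR : ℝ := Rt (fun ij : (a×b) × (a×b) => Complex.normSq (K ij.1 ij.2))
    (fun ij => p ij.1) (fun ij => q ij.2) t with hRRdef
  set RA : ℝ := Rt (fun kl : a × a => Complex.normSq (K2 kl.1 kl.2))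
    (fun kl => p2 kl.1) (fun kl => q2 kl.2) t with hRAdef
  show RA ≤ RR
  have hden : ∀ (i j : a×b), 0 < p i + t * q j := fun i j =>
    add_pos_of_nonneg_of_pos (hp i) (mul_pos ht (hq j))
  have hden2 : ∀ (k l : a), 0 < p2 k + t * q2 l := fun k l =>
    add_pos_of_nonneg_of_pos (hp2 k) (mul_pos ht (hq2 l))
  set g : (a×b) → (a×b) → ℝ := fun i j => q j * Real.sqrt (q j) / (p i + t * q j) with hg
  set M : Matrix (a×b) (a×b) ℂ := Matrix.of (fun i j => K i j * (g i j : ℂ)) with hM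
  set z : Matrix (a×b) (a×b) ℂ := U * M * Vuᴴ with hz
  set g2 : a → a → ℝ := fun k l => q2 l * Real.sqrt (q2 l) / (p2 k + t * q2 l) with hg2
  set N : Matrix a a ℂ := Matrix.of (fun k l => K2 k l * (g2 k l : ℂ)) with hN
  set y : Matrix a a ℂ := U2 * N * V2ᴴ with hy
  set sσ : Matrix (a×b) (a×b) ℂ := Vu * rd (fun j => Real.sqrt (q j)) * Vuᴴ with hsσ
  set isσ : Matrix (a×b) (a×b) ℂ := Vu * rd (fun j => (Real.sqrt (q j))⁻¹) * Vuᴴ with hisσ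
  set iσ : Matrix (a×b) (a×b) ℂ := Vu * rd (fun j => (q j)⁻¹) * Vuᴴ with hiσ
  set sσA : Matrix a a ℂ := V2 * rd (fun l => Real.sqrt (q2 l)) * V2ᴴ with hsσA
  set isσA : Matrix a a ℂ := V2 * rd (fun l => (Real.sqrt (q2 l))⁻¹) * V2ᴴ with hisσA
  set iσA : Matrix a a ℂ := V2 * rd (fun l => (q2 l)⁻¹) * V2ᴴ with hiσA
  set cM : Matrix a a ℂ := y * isσA with hcM
  set Wv : Matrix (a×b) (a×b) ℂ := (cM ⊗ₖ (1 : Matrix b b ℂ)) * sσ with hWv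
  -- the Sylvester solutions
  have keyz : rd p * M * rd (fun j => (q j)⁻¹) + (t:ℂ) • M
      = K * rd (fun j => Real.sqrt (q j)) := by
    ext i j
    have hreal : p i * g i j * (q j)⁻¹ + t * g i j = Real.sqrt (q j) := by
      rw [hg]
      have hd' : p i + q j * t ≠ 0 := by rw [mul_comm]; exact (hden i j).ne'
      field_simp [hd', (hden i j).ne', (hq j).ne']
    simp only [rd, hM, Matrix.of_apply, Matrix.diagonal_mul, Matrix.mul_diagonal,
      Matrix.add_apply, Matrix.smul_apply, smul_eq_mul]
    rw [← hreal]
    push_cast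
    ring
  have hBfz : ρ * z * iσ + (t:ℂ) • z = sσ := by
    have h1 : ρ * z = U * (rd p * M) * Vuᴴ := by
      rw [hρd, hz]; exact tri_mul_tri U U Vu (rd p) M hU1
    have h2 : ρ * z * iσ = U * (rd p * M * rd (fun j => (q j)⁻¹)) * Vuᴴ := by
      rw [h1, hiσ, tri_mul_tri U Vu Vu _ _ hV1, Matrix.mul_assoc (rd p)]
    have h3 : (t:ℂ) • z = U * ((t:ℂ) • M) * Vuᴴ := by
      rw [hz]; simp [smul_mul_assoc, mul_smul_comm]
    rw [h2, h3, ← Matrix.add_mul, ← Matrix.mul_add]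
    rw [keyz, hK, hsσ]
    simp only [← Matrix.mul_assoc]
    rw [hU2, Matrix.one_mul]
  have keyy : rd p2 * N * rd (fun l => (q2 l)⁻¹) + (t:ℂ) • N
      = K2 * rd (fun l => Real.sqrt (q2 l)) := by
    ext k l
    have hreal : p2 k * g2 k l * (q2 l)⁻¹ + t * g2 k l = Real.sqrt (q2 l) := by
      rw [hg2]
      have hd' : p2 k + q2 l * t ≠ 0 := by rw [mul_comm]; exact (hden2 k l).ne'
      field_simp [hd', (hden2 k l).ne', (hq2 l).ne']
    simp only [rd, hN, Matrix.of_apply, Matrix.diagonal_mul, Matrix.mul_diagonal,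
      Matrix.add_apply, Matrix.smul_apply, smul_eq_mul]
    rw [← hreal]
    push_cast
    ring
  have hBfAy : ptraceB ρ * y * iσA + (t:ℂ) • y = sσA := by
    have h1 : ptraceB ρ * y = U2 * (rd p2 * N) * V2ᴴ := by
      rw [hρAd, hy]; exact tri_mul_tri U2 U2 V2 (rd p2) N hU21
    have h2 : ptraceB ρ * y * iσA = U2 * (rd p2 * N * rd (fun l => (q2 l)⁻¹)) * V2ᴴ := by
      rw [h1, hiσA, tri_mul_tri U2 V2 V2 _ _ hV21, Matrix.mul_assoc (rd p2)]
    have h3 : (t:ℂ) • y = U2 * ((t:ℂ) • N) * V2ᴴ := by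
      rw [hy]; simp [smul_mul_assoc, mul_smul_comm]
    rw [h2, h3, ← Matrix.add_mul, ← Matrix.mul_add]
    rw [keyy, hK2, hsσA]
    simp only [← Matrix.mul_assoc]
    rw [hU22, Matrix.one_mul]
  have hgsq : ∀ (i j : a×b), g i j * Real.sqrt (q j) = (q j)^2 / (p i + t * q j) := by
    intro i j
    rw [hg]
    rw [div_mul_eq_mul_div, mul_assoc, Real.mul_self_sqrt (hq j).le, ← pow_two]
  have hgsq2 : ∀ (k l : a), g2 k l * Real.sqrt (q2 l) = (q2 l)^2 / (p2 k + t * q2 l) := by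
    intro k l
    rw [hg2]
    rw [div_mul_eq_mul_div, mul_assoc, Real.mul_self_sqrt (hq2 l).le, ← pow_two]
  have hRRsum : (RR : ℂ) = ∑ j : a×b, ∑ i : a×b,
      ((Complex.normSq (K i j) * ((q j)^2 / (p i + t * q j)) : ℝ) : ℂ) := by
    have h : RR = ∑ j : a×b, ∑ i : a×b,
        Complex.normSq (K i j) * ((q j)^2 / (p i + t * q j)) := by
      rw [hRRdef]
      simp only [Rt, mul_div_assoc]
      rw [Fintype.sum_prod_type]
      exact Finset.sum_comm
    rw [h]
    push_cast
    rfl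
  have hRAsum : (RA : ℂ) = ∑ l : a, ∑ k : a,
      ((Complex.normSq (K2 k l) * ((q2 l)^2 / (p2 k + t * q2 l)) : ℝ) : ℂ) := by
    have h : RA = ∑ l : a, ∑ k : a,
        Complex.normSq (K2 k l) * ((q2 l)^2 / (p2 k + t * q2 l)) := by
      rw [hRAdef]
      simp only [Rt, mul_div_assoc]
      rw [Fintype.sum_prod_type]
      exact Finset.sum_comm
    rw [h]
    push_cast
    rfl
  have hE1 : (zᴴ * sσ).trace = (RR : ℂ) := by
    have h1 : zᴴ * sσ = Vu * (Mᴴ * (K * rd (fun j => Real.sqrt (q j)))) * Vuᴴ := by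
      rw [hz, tri_conjT, hsσ, hK]
      simp only [Matrix.mul_assoc]
    rw [h1, trace_conj _ _ hV1, ← Matrix.mul_assoc]
    rw [show rd (fun j : a×b => Real.sqrt (q j))
        = Matrix.diagonal (fun j : a×b => ((Real.sqrt (q j) : ℝ) : ℂ)) from rfl,
      trace_conjT_mul_mul_diagonal, hRRsum]
    refine Finset.sum_congr rfl fun j _ => Finset.sum_congr rfl fun i _ => ?_
    rw [hM]
    simp only [Matrix.of_apply]
    rw [star_mul_real_mul, hgsq]
  have hyA : (yᴴ * sσA).trace = (RA : ℂ) := by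
    have h1 : yᴴ * sσA = V2 * (Nᴴ * (K2 * rd (fun l => Real.sqrt (q2 l)))) * V2ᴴ := by
      rw [hy, tri_conjT, hsσA, hK2]
      simp only [Matrix.mul_assoc]
    rw [h1, trace_conj _ _ hV21, ← Matrix.mul_assoc]
    rw [show rd (fun l : a => Real.sqrt (q2 l))
        = Matrix.diagonal (fun l : a => ((Real.sqrt (q2 l) : ℝ) : ℂ)) from rfl,
      trace_conjT_mul_mul_diagonal, hRAsum]
    refine Finset.sum_congr rfl fun l _ => Finset.sum_congr rfl fun k _ => ?_
    rw [hN]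
    simp only [Matrix.of_apply]
    rw [star_mul_real_mul, hgsq2]
  have hyA' : (y * sσA).trace = (RA : ℂ) := by
    have h1 : y * sσA = U2 * (N * rd (fun l => Real.sqrt (q2 l))) * V2ᴴ := by
      rw [hy, hsσA]
      exact tri_mul_tri U2 V2 V2 _ _ hV21
    rw [h1, Matrix.trace_mul_cycle]
    have h2 : V2ᴴ * U2 = K2ᴴ := by rw [hK2, conjTranspose_mul, conjTranspose_conjTranspose]
    rw [h2, ← Matrix.mul_assoc]
    rw [show rd (fun l : a => Real.sqrt (q2 l))
        = Matrix.diagonal (fun l : a => ((Real.sqrt (q2 l) : ℝ) : ℂ)) from rfl,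
      trace_conjT_mul_mul_diagonal, hRAsum]
    refine Finset.sum_congr rfl fun l _ => Finset.sum_congr rfl fun k _ => ?_
    rw [hN]
    simp only [Matrix.of_apply]
    rw [star_mul_mul_real, hgsq2]
  have hiσH : iσᴴ = iσ := by rw [hiσ]; exact sand_conjT _ _
  have hsσH : sσᴴ = sσ := by rw [hsσ]; exact sand_conjT _ _
  have hisσAH : isσAᴴ = isσA := by rw [hisσA]; exact sand_conjT _ _
  have hSA : ∀ X Y : Matrix (a×b) (a×b) ℂ,
      (Xᴴ * (ρ * Y * iσ + (t:ℂ) • Y)).trace = ((ρ * X * iσ + (t:ℂ) • X)ᴴ * Y).trace := by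
    intro X Y
    rw [Matrix.mul_add, Matrix.trace_add, conjTranspose_add, Matrix.add_mul, Matrix.trace_add]
    congr 1
    · rw [conjTranspose_mul (ρ * X) iσ, conjTranspose_mul ρ X, hiσH, hρ.1.eq]
      rw [show Xᴴ * (ρ * Y * iσ) = (Xᴴ * (ρ * Y)) * iσ by simp only [Matrix.mul_assoc]]
      rw [Matrix.trace_mul_comm]
      simp only [Matrix.mul_assoc]
    · rw [Matrix.mul_smul, Matrix.trace_smul, conjTranspose_smul, Matrix.smul_mul,
        Matrix.trace_smul]
      congr 1
      simp [RCLike.star_def, Complex.conj_ofReal]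
  have hsσρ' : sσ * sσ = ρ' := by
    rw [hsσ, sand_mul_sand Vu hV1,
      show (fun i : a×b => Real.sqrt (q i) * Real.sqrt (q i)) = q from
        funext fun i => Real.mul_self_sqrt (hq i).le, ← hσd]
  have hsis : sσ * iσ * sσ = 1 := by
    rw [hsσ, hiσ, sand_mul_sand Vu hV1, sand_mul_sand Vu hV1,
      show (fun i : a×b => Real.sqrt (q i) * (q i)⁻¹ * Real.sqrt (q i)) = fun _ => 1 from
        funext fun i => by
          rw [mul_comm, ← mul_assoc, Real.mul_self_sqrt (hq i).le]
          exact mul_inv_cancel₀ (hq i).ne',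
      rd_one, Matrix.mul_one, hV2]
  have hisis : isσA * (ptraceB ρ') * isσA = 1 := by
    rw [hσAd, hisσA, sand_mul_sand V2 hV21, sand_mul_sand V2 hV21,
      show (fun l : a => (Real.sqrt (q2 l))⁻¹ * q2 l * (Real.sqrt (q2 l))⁻¹) = fun _ => 1 from
        funext fun l => by
          have hs : Real.sqrt (q2 l) ≠ 0 := (Real.sqrt_pos.mpr (hq2 l)).ne'
          rw [mul_comm, ← mul_assoc, ← mul_inv, Real.mul_self_sqrt (hq2 l).le]
          exact inv_mul_cancel₀ (hq2 l).ne',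
      rd_one, Matrix.mul_one, hV22]
  have hisiA : isσA * isσA = iσA := by
    rw [hisσA, hiσA, sand_mul_sand V2 hV21,
      show (fun l : a => (Real.sqrt (q2 l))⁻¹ * (Real.sqrt (q2 l))⁻¹) = fun l => (q2 l)⁻¹ from
        funext fun l => by rw [← mul_inv, Real.mul_self_sqrt (hq2 l).le]]
  have hcMσA : cM * ptraceB ρ' = y * sσA := by
    rw [hcM, hσAd, hisσA, Matrix.mul_assoc, sand_mul_sand V2 hV21,
      show (fun l : a => (Real.sqrt (q2 l))⁻¹ * q2 l) = fun l => Real.sqrt (q2 l) from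
        funext fun l => by rw [inv_mul_eq_div, Real.div_sqrt], hsσA]
  have hσAcM : ptraceB ρ' * isσA = sσA := by
    rw [hσAd, hisσA, sand_mul_sand V2 hV21,
      show (fun l : a => q2 l * (Real.sqrt (q2 l))⁻¹) = fun l => Real.sqrt (q2 l) from
        funext fun l => by rw [← div_eq_mul_inv, Real.div_sqrt], hsσA]
  have hcross1 : (zᴴ * (ρ * Wv * iσ + (t:ℂ) • Wv)).trace = (RA : ℂ) := by
    rw [hSA z Wv, hBfz, hsσH, hWv]
    rw [show sσ * (cM ⊗ₖ (1 : Matrix b b ℂ) * sσ) = sσ * (cM ⊗ₖ (1 : Matrix b b ℂ)) * sσ by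
      simp only [Matrix.mul_assoc]]
    rw [Matrix.trace_mul_cycle sσ (cM ⊗ₖ (1 : Matrix b b ℂ)) sσ, hsσρ']
    rw [Matrix.trace_mul_comm, trace_kron_mul, hcMσA, hyA']
  have hcross2 : (Wvᴴ * (ρ * z * iσ + (t:ℂ) • z)).trace = (RA : ℂ) := by
    rw [hBfz, hWv, conjTranspose_mul, kron_one_conjT, hsσH]
    rw [Matrix.trace_mul_cycle sσ (cMᴴ ⊗ₖ (1 : Matrix b b ℂ)) sσ, hsσρ']
    rw [Matrix.trace_mul_comm, trace_kron_mul, hcM, conjTranspose_mul, hisσAH]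
    rw [Matrix.mul_assoc, Matrix.trace_mul_comm, Matrix.mul_assoc, hσAcM, hyA]
  have hE3 : (Wvᴴ * (ρ * Wv * iσ + (t:ℂ) • Wv)).trace = (RA : ℂ) := by
    have hWvH : Wvᴴ = sσ * (cMᴴ ⊗ₖ (1 : Matrix b b ℂ)) := by
      rw [hWv, conjTranspose_mul, kron_one_conjT, hsσH]
    have claim1 : (Wvᴴ * (ρ * Wv * iσ)).trace = (yᴴ * (ptraceB ρ * y * iσA)).trace := by
      rw [hWvH, hWv]
      rw [show sσ * (cMᴴ ⊗ₖ (1 : Matrix b b ℂ)) * (ρ * (cM ⊗ₖ (1 : Matrix b b ℂ) * sσ) * iσ)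
          = sσ * ((cMᴴ ⊗ₖ (1 : Matrix b b ℂ)) * ρ * (cM ⊗ₖ (1 : Matrix b b ℂ)) * sσ * iσ) by
        simp only [Matrix.mul_assoc]]
      rw [Matrix.trace_mul_comm]
      rw [show (cMᴴ ⊗ₖ (1 : Matrix b b ℂ)) * ρ * (cM ⊗ₖ (1 : Matrix b b ℂ)) * sσ * iσ * sσ
          = (cMᴴ ⊗ₖ (1 : Matrix b b ℂ)) * ρ * (cM ⊗ₖ (1 : Matrix b b ℂ)) * (sσ * iσ * sσ) by
        simp only [Matrix.mul_assoc]]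
      rw [hsis, Matrix.mul_one, Matrix.trace_mul_cycle, ← Matrix.mul_kronecker_mul,
        Matrix.one_mul, trace_kron_mul]
      rw [hcM, conjTranspose_mul, hisσAH]
      rw [show y * isσA * (isσA * yᴴ) = y * (isσA * isσA) * yᴴ by simp only [Matrix.mul_assoc],
        hisiA]
      rw [show y * iσA * yᴴ * ptraceB ρ = (y * iσA) * (yᴴ * ptraceB ρ) by
        simp only [Matrix.mul_assoc], Matrix.trace_mul_comm]
      simp only [Matrix.mul_assoc]
    have claim2 : (Wvᴴ * Wv).trace = (yᴴ * y).trace := by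
      rw [hWvH, hWv]
      rw [show sσ * (cMᴴ ⊗ₖ (1 : Matrix b b ℂ)) * (cM ⊗ₖ (1 : Matrix b b ℂ) * sσ)
          = sσ * ((cMᴴ ⊗ₖ (1 : Matrix b b ℂ)) * (cM ⊗ₖ (1 : Matrix b b ℂ)) * sσ) by
        simp only [Matrix.mul_assoc]]
      rw [Matrix.trace_mul_comm]
      rw [show (cMᴴ ⊗ₖ (1 : Matrix b b ℂ)) * (cM ⊗ₖ (1 : Matrix b b ℂ)) * sσ * sσ
          = (cMᴴ ⊗ₖ (1 : Matrix b b ℂ)) * (cM ⊗ₖ (1 : Matrix b b ℂ)) * (sσ * sσ) by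
        simp only [Matrix.mul_assoc]]
      rw [hsσρ', ← Matrix.mul_kronecker_mul, Matrix.one_mul, trace_kron_mul]
      rw [hcM, conjTranspose_mul, hisσAH]
      rw [show isσA * yᴴ * (y * isσA) * ptraceB ρ' = isσA * (yᴴ * y) * (isσA * ptraceB ρ') by
        simp only [Matrix.mul_assoc]]
      rw [Matrix.trace_mul_cycle]
      rw [show isσA * ptraceB ρ' * isσA * (yᴴ * y) = (isσA * ptraceB ρ' * isσA) * (yᴴ * y) by
        simp only [Matrix.mul_assoc]]
      rw [hisis, Matrix.one_mul]
    rw [Matrix.mul_add, Matrix.trace_add, Matrix.mul_smul, Matrix.trace_smul, claim1, claim2]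
    have : (yᴴ * (ptraceB ρ * y * iσA)).trace + (t:ℂ) • (yᴴ * y).trace
        = (yᴴ * (ptraceB ρ * y * iσA + (t:ℂ) • y)).trace := by
      rw [Matrix.mul_add, Matrix.trace_add, Matrix.mul_smul, Matrix.trace_smul]
    rw [this, hBfAy, hyA]
  have hE0 : (zᴴ * (ρ * z * iσ + (t:ℂ) • z)).trace = (RR : ℂ) := by
    rw [hBfz, hE1]
  have hposGen : ∀ X : Matrix (a×b) (a×b) ℂ,
      0 ≤ ((Xᴴ * (ρ * X * iσ + (t:ℂ) • X)).trace).re := by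
    intro X
    have hiσ2 : iσ = isσ * isσ := by
      rw [hiσ, hisσ, sand_mul_sand Vu hV1,
        show (fun j : a×b => (Real.sqrt (q j))⁻¹ * (Real.sqrt (q j))⁻¹) = fun j => (q j)⁻¹ from
          funext fun j => by rw [← mul_inv, Real.mul_self_sqrt (hq j).le]]
    have hisσH : isσᴴ = isσ := by rw [hisσ]; exact sand_conjT _ _
    have key : (Xᴴ * (ρ * X * iσ)).trace = ((X * isσ)ᴴ * ρ * (X * isσ)).trace := by
      rw [conjTranspose_mul X isσ, hisσH, hiσ2]
      rw [show Xᴴ * (ρ * X * (isσ * isσ)) = (Xᴴ * (ρ * (X * isσ))) * isσ by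
        simp only [Matrix.mul_assoc]]
      rw [Matrix.trace_mul_comm]
      simp only [Matrix.mul_assoc]
    have h1 : 0 ≤ ((Xᴴ * (ρ * X * iσ)).trace).re := by
      rw [key]
      exact psd_trace_re_nonneg (hρ.conjTranspose_mul_mul_same (X * isσ))
    have h2 : 0 ≤ ((Xᴴ * X).trace).re :=
      psd_trace_re_nonneg (Matrix.posSemidef_conjTranspose_mul_self X)
    rw [Matrix.mul_add, Matrix.trace_add, Matrix.mul_smul, Matrix.trace_smul, Complex.add_re]
    have h3 : ((t:ℂ) • (Xᴴ * X).trace).re = t * ((Xᴴ * X).trace).re := by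
      rw [smul_eq_mul]
      simp [Complex.mul_re]
    rw [h3]
    have := mul_nonneg ht.le h2
    linarith
  -- combine
  have hXz := hposGen (Wv - z)
  have hlin : ρ * (Wv - z) * iσ + (t:ℂ) • (Wv - z)
      = (ρ * Wv * iσ + (t:ℂ) • Wv) - (ρ * z * iσ + (t:ℂ) • z) := by
    rw [Matrix.mul_sub, Matrix.sub_mul, smul_sub]
    abel
  rw [hlin, conjTranspose_sub, Matrix.sub_mul, Matrix.mul_sub, Matrix.mul_sub,
    Matrix.trace_sub, Matrix.trace_sub, Matrix.trace_sub,
    hE3, hcross2, hcross1, hE0] at hXz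
  simp only [Complex.sub_re, Complex.ofReal_re] at hXz
  linarith

end Resolvent

end DPIAux

open DPIAux in
/-- Monotonicity of relative entropy under partial trace (data processing):
`S(ρ_A ‖ ρ'_A) ≤ S(ρ ‖ ρ')`, and consequently
`S(ρ_A) + Tr(ρ_A log ρ'_A) ≥ S(ρ) + Tr(ρ log ρ')`. -/
theorem relative_entropy_monotone_under_partial_trace
    {a b : Type*} [Fintype a] [DecidableEq a] [Fintype b] [DecidableEq b]
    (ρ ρ' : Matrix (a × b) (a × b) ℂ)
    (hρ : ρ.PosSemidef) (hρ1 : ρ.trace = 1)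
    (hρ' : ρ'.PosDef) (hρ'1 : ρ'.trace = 1) :
    (((ptraceB ρ) * (mlog (ptraceB ρ) - mlog (ptraceB ρ'))).trace).re ≤
      ((ρ * (mlog ρ - mlog ρ')).trace).re ∧
    vnEntropy ρ + ((ρ * mlog ρ').trace).re ≤
      vnEntropy (ptraceB ρ) + (((ptraceB ρ) * mlog (ptraceB ρ')).trace).re := by
  classical
  have hne : Nonempty (a × b) := by
    by_contra h
    rw [not_nonempty_iff] at h
    rw [Matrix.trace, Finset.univ_eq_empty, Finset.sum_empty] at hρ'1
    exact zero_ne_one hρ'1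
  have hb : Nonempty b := ⟨hne.some.2⟩
  have hρA : (ptraceB ρ).PosSemidef := ptraceB_posSemidef hρ
  have hσA : (ptraceB ρ').PosDef := ptraceB_posDef hρ'
  have hH := hρ.1
  have hS := hρ'.1
  have hHA := hρA.1
  have hSA2 := hσA.1
  set U : Matrix (a×b) (a×b) ℂ := ↑(Matrix.IsHermitian.eigenvectorUnitary hH)
    with hUdef
  set Vu : Matrix (a×b) (a×b) ℂ := ↑(Matrix.IsHermitian.eigenvectorUnitary hS)
    with hVdef
  set U2 : Matrix a a ℂ := ↑(Matrix.IsHermitian.eigenvectorUnitary hHA)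
    with hU2def
  set V2 : Matrix a a ℂ := ↑(Matrix.IsHermitian.eigenvectorUnitary hSA2)
    with hV2def
  set p : (a×b) → ℝ := hH.eigenvalues with hpdef
  set q : (a×b) → ℝ := hS.eigenvalues with hqdef
  set p2 : a → ℝ := hHA.eigenvalues with hp2def
  set q2 : a → ℝ := hSA2.eigenvalues with hq2def
  have hUf := unitary_coe_facts (Matrix.IsHermitian.eigenvectorUnitary hH)
  have hVf := unitary_coe_facts (Matrix.IsHermitian.eigenvectorUnitary hS)
  have hU2f := unitary_coe_facts (Matrix.IsHermitian.eigenvectorUnitary hHA)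
  have hV2f := unitary_coe_facts (Matrix.IsHermitian.eigenvectorUnitary hSA2)
  have hρd : ρ = U * rd p * Uᴴ := spectral' hH
  have hσd : ρ' = Vu * rd q * Vuᴴ := spectral' hS
  have hρAd : ptraceB ρ = U2 * rd p2 * U2ᴴ := spectral' hHA
  have hσAd : ptraceB ρ' = V2 * rd q2 * V2ᴴ := spectral' hSA2
  have hmρ : mlog ρ = U * rd (fun i => Real.log (p i)) * Uᴴ := mlog_eq hH
  have hmσ : mlog ρ' = Vu * rd (fun j => Real.log (q j)) * Vuᴴ := mlog_eq hS
  have hmρA : mlog (ptraceB ρ) = U2 * rd (fun k => Real.log (p2 k)) * U2ᴴ := mlog_eq hHA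
  have hmσA : mlog (ptraceB ρ') = V2 * rd (fun l => Real.log (q2 l)) * V2ᴴ := mlog_eq hSA2
  have hp : ∀ i, 0 ≤ p i := fun i => hρ.eigenvalues_nonneg i
  have hq : ∀ i, 0 < q i := fun i => hρ'.eigenvalues_pos i
  have hp2 : ∀ k, 0 ≤ p2 k := fun k => hρA.eigenvalues_nonneg k
  have hq2 : ∀ k, 0 < q2 k := fun k => hσA.eigenvalues_pos k
  have hsum_p : ∑ i, p i = 1 := by
    have h := sum_eigenvalues_eq hH
    rw [hρ1] at h
    exact_mod_cast h
  have hsum_q : ∑ i, q i = 1 := by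
    have h := sum_eigenvalues_eq hS
    rw [hρ'1] at h
    exact_mod_cast h
  have hsum_p2 : ∑ k, p2 k = 1 := by
    have h := sum_eigenvalues_eq hHA
    rw [ptraceB_trace, hρ1] at h
    exact_mod_cast h
  have hsum_q2 : ∑ k, q2 k = 1 := by
    have h := sum_eigenvalues_eq hSA2
    rw [ptraceB_trace, hρ'1] at h
    exact_mod_cast h
  set K : Matrix (a×b) (a×b) ℂ := Uᴴ * Vu with hKdef
  set K2 : Matrix a a ℂ := U2ᴴ * V2 with hK2def
  have hKKH : K * Kᴴ = 1 := by
    rw [hKdef, conjTranspose_mul, conjTranspose_conjTranspose,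
      show Uᴴ * Vu * (Vuᴴ * U) = Uᴴ * ((Vu * Vuᴴ) * U) by simp only [Matrix.mul_assoc],
      hVf.2, Matrix.one_mul, hUf.1]
  have hKHK : Kᴴ * K = 1 := by
    rw [hKdef, conjTranspose_mul, conjTranspose_conjTranspose,
      show Vuᴴ * U * (Uᴴ * Vu) = Vuᴴ * ((U * Uᴴ) * Vu) by simp only [Matrix.mul_assoc],
      hUf.2, Matrix.one_mul, hVf.1]
  have hK2KH : K2 * K2ᴴ = 1 := by
    rw [hK2def, conjTranspose_mul, conjTranspose_conjTranspose,
      show U2ᴴ * V2 * (V2ᴴ * U2) = U2ᴴ * ((V2 * V2ᴴ) * U2) by simp only [Matrix.mul_assoc],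
      hV2f.2, Matrix.one_mul, hU2f.1]
  have hK2HK : K2ᴴ * K2 = 1 := by
    rw [hK2def, conjTranspose_mul, conjTranspose_conjTranspose,
      show V2ᴴ * U2 * (U2ᴴ * V2) = V2ᴴ * ((U2 * U2ᴴ) * V2) by simp only [Matrix.mul_assoc],
      hU2f.2, Matrix.one_mul, hV2f.1]
  set c : (a×b) × (a×b) → ℝ := fun ij => Complex.normSq (K ij.1 ij.2) with hcdef
  set pp : (a×b) × (a×b) → ℝ := fun ij => p ij.1 with hppdef
  set qq : (a×b) × (a×b) → ℝ := fun ij => q ij.2 with hqqdef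
  set c2 : a × a → ℝ := fun kl => Complex.normSq (K2 kl.1 kl.2) with hc2def
  set pp2 : a × a → ℝ := fun kl => p2 kl.1 with hpp2def
  set qq2 : a × a → ℝ := fun kl => q2 kl.2 with hqq2def
  have hcp : ∑ ij, c ij * pp ij = 1 := by
    rw [Fintype.sum_prod_type]
    calc ∑ i, ∑ j, c (i, j) * pp (i, j) = ∑ i : a×b, p i := by
          refine Finset.sum_congr rfl fun i _ => ?_
          rw [hcdef, hppdef]
          simp only
          rw [← Finset.sum_mul, row_sum_normSq hKKH, one_mul]
      _ = 1 := hsum_p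
  have hcq : ∑ ij, c ij * qq ij = 1 := by
    rw [Fintype.sum_prod_type, Finset.sum_comm]
    calc ∑ j, ∑ i, c (i, j) * qq (i, j) = ∑ j : a×b, q j := by
          refine Finset.sum_congr rfl fun j _ => ?_
          rw [hcdef, hqqdef]
          simp only
          rw [← Finset.sum_mul, col_sum_normSq hKHK, one_mul]
      _ = 1 := hsum_q
  have hcp2 : ∑ kl, c2 kl * pp2 kl = 1 := by
    rw [Fintype.sum_prod_type]
    calc ∑ k, ∑ l, c2 (k, l) * pp2 (k, l) = ∑ k : a, p2 k := by
          refine Finset.sum_congr rfl fun k _ => ?_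
          rw [hc2def, hpp2def]
          simp only
          rw [← Finset.sum_mul, row_sum_normSq hK2KH, one_mul]
      _ = 1 := hsum_p2
  have hcq2 : ∑ kl, c2 kl * qq2 kl = 1 := by
    rw [Fintype.sum_prod_type, Finset.sum_comm]
    calc ∑ l, ∑ k, c2 (k, l) * qq2 (k, l) = ∑ l : a, q2 l := by
          refine Finset.sum_congr rfl fun l _ => ?_
          rw [hc2def, hqq2def]
          simp only
          rw [← Finset.sum_mul, col_sum_normSq hK2HK, one_mul]
      _ = 1 := hsum_q2
  have hR : ∀ t : ℝ, 0 < t → Rt c2 pp2 qq2 t ≤ Rt c pp qq t := by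
    intro t ht
    exact resolvent_mono ρ ρ' hρ U Vu p q hUf.1 hUf.2 hVf.1 hVf.2 hp hq hρd hσd
      U2 V2 p2 q2 hU2f.1 hU2f.2 hV2f.1 hV2f.2 hp2 hq2 hρAd hσAd ht
  have smain := scalar_main (c := c) (p := pp) (q := qq) (c' := c2) (p' := pp2) (q' := qq2)
    (fun ij => hp ij.1) (fun ij => hq ij.2) hcp hcq
    (fun kl => hp2 kl.1) (fun kl => hq2 kl.2) hcp2 hcq2 hR
  -- trace identifications
  have hsplit1 : ∑ ij : (a×b) × (a×b), c ij * (pp ij * Real.log (pp ij))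
      = ∑ i : a×b, p i * Real.log (p i) := by
    rw [Fintype.sum_prod_type]
    refine Finset.sum_congr rfl fun i _ => ?_
    rw [hcdef, hppdef]
    simp only
    rw [← Finset.sum_mul, row_sum_normSq hKKH, one_mul]
  have hsplit1A : ∑ kl : a × a, c2 kl * (pp2 kl * Real.log (pp2 kl))
      = ∑ k : a, p2 k * Real.log (p2 k) := by
    rw [Fintype.sum_prod_type]
    refine Finset.sum_congr rfl fun k _ => ?_
    rw [hc2def, hpp2def]
    simp only
    rw [← Finset.sum_mul, row_sum_normSq hK2KH, one_mul]
  have hT1 : ((ρ * mlog ρ).trace).re = ∑ ij, c ij * (pp ij * Real.log (pp ij)) := by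
    have h1 : ρ * mlog ρ = U * rd (fun i => p i * Real.log (p i)) * Uᴴ := by
      rw [hmρ, hρd, sand_mul_sand _ hUf.1]
    rw [h1, trace_conj _ _ hUf.1, trace_rd, hsplit1]
    simp
  have hT1A : (((ptraceB ρ) * mlog (ptraceB ρ)).trace).re
      = ∑ kl, c2 kl * (pp2 kl * Real.log (pp2 kl)) := by
    have h1 : ptraceB ρ * mlog (ptraceB ρ) = U2 * rd (fun k => p2 k * Real.log (p2 k)) * U2ᴴ := by
      rw [hmρA, hρAd, sand_mul_sand _ hU2f.1]
    rw [h1, trace_conj _ _ hU2f.1, trace_rd, hsplit1A]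
    simp
  have hT2 : ((ρ * mlog ρ').trace).re = ∑ ij, c ij * (pp ij * Real.log (qq ij)) := by
    have h1 : (ρ * mlog ρ').trace
        = (rd p * K * rd (fun j => Real.log (q j)) * Kᴴ).trace := by
      rw [hmσ, hρd, trace_sand_sand, hKdef]
    have h2 : ∑ ij : (a×b) × (a×b), c ij * (pp ij * Real.log (qq ij))
        = ∑ i : a×b, ∑ j : a×b, p i * Real.log (q j) * Complex.normSq (K i j) := by
      rw [Fintype.sum_prod_type]
      refine Finset.sum_congr rfl fun i _ => Finset.sum_congr rfl fun j _ => ?_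
      rw [hcdef, hppdef, hqqdef]
      simp only
      ring
    rw [h1, trace_dKeK, h2]
    simp
  have hT2A : (((ptraceB ρ) * mlog (ptraceB ρ')).trace).re
      = ∑ kl, c2 kl * (pp2 kl * Real.log (qq2 kl)) := by
    have h1 : ((ptraceB ρ) * mlog (ptraceB ρ')).trace
        = (rd p2 * K2 * rd (fun l => Real.log (q2 l)) * K2ᴴ).trace := by
      rw [hmσA, hρAd, trace_sand_sand, hK2def]
    have h2 : ∑ kl : a × a, c2 kl * (pp2 kl * Real.log (qq2 kl))
        = ∑ k : a, ∑ l : a, p2 k * Real.log (q2 l) * Complex.normSq (K2 k l) := by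
      rw [Fintype.sum_prod_type]
      refine Finset.sum_congr rfl fun k _ => Finset.sum_congr rfl fun l _ => ?_
      rw [hc2def, hpp2def, hqq2def]
      simp only
      ring
    rw [h1, trace_dKeK, h2]
    simp
  constructor
  · rw [Matrix.mul_sub, Matrix.mul_sub, Matrix.trace_sub, Matrix.trace_sub,
      Complex.sub_re, Complex.sub_re]
    linarith [smain, hT1, hT2, hT1A, hT2A]
  · simp only [vnEntropy]
    linarith [smain, hT1, hT2, hT1A, hT2A]
end
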